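/- Let T be a probability measure on [0,∞) whose essential supremum v_sup is finite, and let x : [0,∞) → [0,1] and p : [0,∞) → [0,∞) (nonnegative payments) satisfy IC and IR for all values in the support of T, i.e. for all v, ṽ ∈ supp T, v·x(v) − p(v) ≥ v·x(ṽ) − p(ṽ) and v·x(v) − p(v) ≥ 0. Suppose x(v) = 0 for every v ∈ supp T with v < v_sup. If the expected utility is strictly positive, i.e. ∫ (v·x(v) − p(v)) dT(v) > 0, then: (i) T({v_sup}) > 0 and x(v_sup) > 0; and (ii) there exists c < v_sup with T((c, v_sup)) = 0, i.e. the essential supremum of T conditioned on the event {v < v_sup} is strictly less than v_sup. -/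

import Mathlib

open MeasureTheory

/-- The essential supremum (in `ℝ≥0∞`) of a measure `T` on `[0,∞)`:
the infimum of all `s` such that the values below `s` have full measure. -/
noncomputable def essSupValue (T : Measure ℝ) : ENNReal :=
  sInf {s : ENNReal | T {v : ℝ | ENNReal.ofReal v ≤ s} = 1}

/-- The (topological) support of a measure `T` on `ℝ`: the points all of
whose open neighbourhoods have positive measure. -/
def measSupport (T : Measure ℝ) : Set ℝ :=
  {v : ℝ | ∀ U : Set ℝ, IsOpen U → v ∈ U → 0 < T U}

lemma compl_measSupport_null (T : Measure ℝ) : T (measSupport T)ᶜ = 0 := by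
  have hsub : (measSupport T)ᶜ ⊆
      ⋃ q : {q : ℚ × ℚ // T (Set.Ioo (q.1 : ℝ) (q.2 : ℝ)) = 0},
        Set.Ioo ((q : ℚ × ℚ).1 : ℝ) ((q : ℚ × ℚ).2 : ℝ) := by
    intro v hv
    simp only [Set.mem_compl_iff, measSupport, Set.mem_setOf_eq] at hv
    push_neg at hv
    obtain ⟨U, hUo, hvU, hU0⟩ := hv
    have hU0' : T U = 0 := le_antisymm hU0 zero_le
    obtain ⟨ε, hε, hball⟩ := Metric.isOpen_iff.mp hUo v hvU
    rw [Real.ball_eq_Ioo] at hball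
    obtain ⟨q, hq1, hq2⟩ := exists_rat_btwn (show v - ε < v by linarith)
    obtain ⟨r, hr1, hr2⟩ := exists_rat_btwn (show v < v + ε by linarith)
    have hsub2 : Set.Ioo (q : ℝ) (r : ℝ) ⊆ U := fun y hy =>
      hball ⟨by linarith [hy.1], by linarith [hy.2]⟩
    have hqr0 : T (Set.Ioo (q : ℝ) (r : ℝ)) = 0 :=
      le_antisymm (hU0' ▸ measure_mono hsub2) zero_le
    exact Set.mem_iUnion.mpr ⟨⟨(q, r), hqr0⟩, ⟨hq2, hr1⟩⟩
  exact measure_mono_null hsub (measure_iUnion_null fun q => q.2)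

lemma Ioi_essSupValue_null (T : Measure ℝ) [IsProbabilityMeasure T]
    (hfin : essSupValue T ≠ ⊤) : T (Set.Ioi (essSupValue T).toReal) = 0 := by
  set s0 := essSupValue T with hs0
  set vs := s0.toReal with hvs
  have key : ∀ n : ℕ, T (Set.Ici (vs + 1 / (n + 1))) = 0 := by
    intro n
    have hε : (0 : ℝ) < 1 / (n + 1) := by positivity
    have hεE : (0 : ENNReal) < ENNReal.ofReal (1 / (n + 1)) := ENNReal.ofReal_pos.2 hε
    have h1 : s0 < s0 + ENNReal.ofReal (1 / (n + 1)) :=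
      ENNReal.lt_add_right hfin hεE.ne'
    obtain ⟨s, hsS, hs⟩ := sInf_lt_iff.mp (hs0 ▸ h1 : sInf _ < _)
    have hstop : s ≠ ⊤ := ne_top_of_lt hs
    have hset : {v : ℝ | ENNReal.ofReal v ≤ s} = Set.Iic s.toReal := by
      ext v; exact ENNReal.ofReal_le_iff_le_toReal hstop
    have hIic : T (Set.Iic s.toReal) = 1 := by rw [← hset]; exact hsS
    have hIoi : T (Set.Ioi s.toReal) = 0 := by
      have := measure_compl (μ := T) (s := Set.Iic s.toReal) measurableSet_Iic (measure_ne_top T _)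
      rw [Set.compl_Iic, measure_univ, hIic, tsub_self] at this
      exact this
    have hlt : s.toReal < vs + 1 / (n + 1) := by
      have hsum_ne : s0 + ENNReal.ofReal (1 / (n + 1)) ≠ ⊤ :=
        ENNReal.add_ne_top.2 ⟨hfin, ENNReal.ofReal_ne_top⟩
      have := (ENNReal.toReal_lt_toReal hstop hsum_ne).mpr hs
      rwa [ENNReal.toReal_add hfin ENNReal.ofReal_ne_top,
        ENNReal.toReal_ofReal hε.le] at this
    exact measure_mono_null (fun y hy => lt_of_lt_of_le hlt hy) hIoi
  have hcover : Set.Ioi vs ⊆ ⋃ n : ℕ, Set.Ici (vs + 1 / (n + 1)) := by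
    intro v hv
    obtain ⟨n, hn⟩ := exists_nat_one_div_lt (sub_pos.2 hv : (0:ℝ) < v - vs)
    exact Set.mem_iUnion.mpr ⟨n, by simp only [Set.mem_Ici]; linarith⟩
  exact measure_mono_null hcover (measure_iUnion_null key)

theorem positive_expected_utility_characterization
    (T : Measure ℝ) [IsProbabilityMeasure T] (hT0 : T (Set.Iio 0) = 0)
    (hfin : essSupValue T ≠ ⊤)
    (x p : ℝ → ℝ)
    (hx01 : ∀ v : ℝ, 0 ≤ x v ∧ x v ≤ 1)
    (hp0 : ∀ v : ℝ, 0 ≤ p v)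
    (hIC : ∀ v w : ℝ, v ∈ measSupport T → w ∈ measSupport T →
      v * x v - p v ≥ v * x w - p w)
    (hIR : ∀ v : ℝ, v ∈ measSupport T → v * x v - p v ≥ 0)
    (hbelow : ∀ v : ℝ, v ∈ measSupport T → v < (essSupValue T).toReal → x v = 0)
    (hpos : 0 < ∫ v, (v * x v - p v) ∂T) :
    (0 < T {(essSupValue T).toReal} ∧ 0 < x (essSupValue T).toReal) ∧
    ∃ c : ℝ, c < (essSupValue T).toReal ∧
      T (Set.Ioo c (essSupValue T).toReal) = 0 := by
  set vs := (essSupValue T).toReal with hvs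
  have hsupp_ae : ∀ᵐ v ∂T, v ∈ measSupport T := by
    rw [ae_iff]; exact compl_measSupport_null T
  have hle_ae : ∀ᵐ v ∂T, v ≤ vs := by
    rw [ae_iff]
    have : {a : ℝ | ¬a ≤ vs} = Set.Ioi vs := by
      ext a; simp only [Set.mem_setOf_eq, Set.mem_Ioi]; exact not_le
    rw [this]; exact Ioi_essSupValue_null T hfin
  -- a.e. v in supp with v < vs has zero utility (indeed x v = 0)
  have hzero : ∀ v : ℝ, v ∈ measSupport T → v < vs → v * x v - p v ≤ 0 := by
    intro v hv hlt
    rw [hbelow v hv hlt]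
    have := hp0 v; nlinarith
  -- T has an atom at vs
  have hatom : 0 < T {vs} := by
    by_contra h
    push_neg at h
    have h0 : T {vs} = 0 := le_antisymm h zero_le
    have hne : ∀ᵐ v ∂T, v ≠ vs := by rw [ae_iff]; simpa using h0
    have hae : ∀ᵐ v ∂T, v * x v - p v ≤ 0 := by
      filter_upwards [hsupp_ae, hle_ae, hne] with v h1 h2 h3
      exact hzero v h1 (lt_of_le_of_ne h2 h3)
    exact absurd (integral_nonpos_of_ae hae) (not_le.mpr hpos)
  have huvs : 0 < vs * x vs - p vs := by
    by_contra h
    push_neg at h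
    have hae : ∀ᵐ v ∂T, v * x v - p v ≤ 0 := by
      filter_upwards [hsupp_ae, hle_ae] with v h1 h2
      rcases lt_or_eq_of_le h2 with h2 | h2
      · exact hzero v h1 h2
      · rw [h2]; exact h
    exact absurd (integral_nonpos_of_ae hae) (not_le.mpr hpos)
  have hxvs : 0 < x vs := by
    by_contra h
    push_neg at h
    have : vs * x vs ≤ 0 := mul_nonpos_of_nonneg_of_nonpos ENNReal.toReal_nonneg h
    have := hp0 vs; linarith
  have hvs_supp : vs ∈ measSupport T := fun U hUo hvsU =>
    lt_of_lt_of_le hatom (measure_mono (Set.singleton_subset_iff.mpr hvsU))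
  refine ⟨⟨hatom, hxvs⟩, vs - (vs * x vs - p vs), by linarith, ?_⟩
  have hsub : Set.Ioo (vs - (vs * x vs - p vs)) vs ⊆ (measSupport T)ᶜ := by
    intro v hv hsupp
    have hx0 : x v = 0 := hbelow v hsupp hv.2
    have hu0 : v * x v - p v = 0 := le_antisymm (hzero v hsupp hv.2) (hIR v hsupp)
    have hIC' := hIC v vs hsupp hvs_supp
    rw [hu0] at hIC'
    have h1 := (hx01 vs).1
    have h2 := (hx01 vs).2
    have h3 := hv.1
    have h4 := hv.2
    nlinarith [mul_nonneg (sub_nonneg.2 h4.le) (sub_nonneg.2 h2)]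
  exact measure_mono_null hsub (compl_measSupport_null T)
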